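/- Suppose the law of Y is the uniform distribution on [a, b] with a < b. Then for every λ ∈ ℝ and every measurable h : ℝ^d → ℝ with φ'(h(X)) bounded and all integrals finite, R_linear(h; λ, b/2, a/2) = R(h); that is, the approximated risk with weights (w₁, w₂) = (b/2, a/2) equals the true risk for any value of the free parameter λ. -/

import Mathlib

open MeasureTheory ProbabilityTheory

private lemma bdd_integrable {α : Type*} [MeasurableSpace α] {P : Measure α} [IsFiniteMeasure P]
    {f : α → ℝ} (hf : AEStronglyMeasurable f P) {C : ℝ} (hb : ∀ᵐ x ∂P, |f x| ≤ C) :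
    Integrable f P :=
  Integrable.mono' (integrable_const C) hf (by simpa [Real.norm_eq_abs] using hb)

/-- If the law of `Y` is uniform on `[a, b]` (`a < b`), then for every
`λ ∈ ℝ` and every measurable model `h` with bounded `φ'(h(X))` and all integrals finite,
the approximated risk `R_linear(h; λ, b/2, a/2)` equals the true Bregman risk `R(h)`. -/
theorem stmt_5
    {Ω : Type*} [MeasurableSpace Ω] {μ : Measure Ω} [IsProbabilityMeasure μ]
    {d : ℕ} {X X' : Ω → (Fin d → ℝ)} {Y Y' : Ω → ℝ}
    (hX : Measurable X) (hY : Measurable Y) (hX' : Measurable X') (hY' : Measurable Y')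
    (hindep : IndepFun (fun ω => (X ω, Y ω)) (fun ω => (X' ω, Y' ω)) μ)
    (hident : μ.map (fun ω => (X ω, Y ω)) = μ.map (fun ω => (X' ω, Y' ω)))
    (a b : ℝ) (hab : a < b)
    (hlaw : μ.map Y = (ENNReal.ofReal (b - a))⁻¹ • (volume.restrict (Set.Icc a b)))
    (φ : ℝ → ℝ) (hφdiff : Differentiable ℝ φ) (hφconv : ConvexOn ℝ Set.univ φ)
    (h : (Fin d → ℝ) → ℝ) (hh : Measurable h)
    (M : ℝ) (hM : ∀ x, |deriv φ (h x)| ≤ M)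
    (hintφY : Integrable (fun ω => φ (Y ω)) μ)
    (hintφh : Integrable (fun ω => φ (h (X ω))) μ)
    (hinth : Integrable (fun ω => h (X ω) * deriv φ (h (X ω))) μ)
    (lam : ℝ) :
    (∫ ω, φ (Y ω) ∂μ)
      - (∫ ω, (φ (h (X ω)) - (h (X ω) - lam) * deriv φ (h (X ω))) ∂μ)
      - (b / 2 - lam / 2) * (∫ ω, deriv φ (h (if Y' ω ≤ Y ω then X ω else X' ω)) ∂μ)
      - (a / 2 - lam / 2) * (∫ ω, deriv φ (h (if Y' ω ≤ Y ω then X' ω else X ω)) ∂μ)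
      = ∫ ω, (φ (Y ω) - φ (h (X ω)) - (Y ω - h (X ω)) * deriv φ (h (X ω))) ∂μ := by
  classical
  have hM0 : 0 ≤ M := le_trans (abs_nonneg _) (hM 0)
  have hba : (0:ℝ) < b - a := sub_pos.mpr hab
  set g : ((Fin d → ℝ) × ℝ) → ℝ := fun p => deriv φ (h p.1) with hg_def
  have hgmeas : Measurable g := (measurable_deriv φ).comp (hh.comp measurable_fst)
  have hgbd : ∀ p, |g p| ≤ M := fun p => hM _
  have hXY : Measurable fun ω => (X ω, Y ω) := hX.prodMk hY
  have hXY' : Measurable fun ω => (X' ω, Y' ω) := hX'.prodMk hY'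
  set ν := μ.map (fun ω => (X ω, Y ω)) with hν_def
  have hνprob : IsProbabilityMeasure ν := Measure.isProbabilityMeasure_map hXY.aemeasurable
  have hjm : Measurable fun ω => ((X ω, Y ω), (X' ω, Y' ω)) := hXY.prodMk hXY'
  have hjoint : μ.map (fun ω => ((X ω, Y ω), (X' ω, Y' ω))) = ν.prod ν := by
    rw [(indepFun_iff_map_prod_eq_prod_map_map hXY.aemeasurable hXY'.aemeasurable).mp hindep,
      ← hident]
  set m := μ.map Y with hm_def
  have hmprob : IsProbabilityMeasure m := Measure.isProbabilityMeasure_map hY.aemeasurable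
  have hsnd : ν.map Prod.snd = m := by
    rw [hν_def, Measure.map_map measurable_snd hXY]; rfl
  -- measure facts about m
  have hmsing : ∀ t : ℝ, m {t} = 0 := by
    intro t
    rw [hlaw, Measure.smul_apply, Measure.restrict_apply (measurableSet_singleton t)]
    have h0 : volume ({t} ∩ Set.Icc a b) = 0 :=
      measure_mono_null Set.inter_subset_left Real.volume_singleton
    rw [h0, smul_zero]
  have hIio : ∀ t : ℝ, m (Set.Iio t) = m (Set.Iic t) := by
    intro t
    rw [← Set.Iic_diff_right, measure_diff_null (hmsing t)]
  have hsupp : m (Set.Icc a b)ᶜ = 0 := by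
    rw [hlaw, Measure.smul_apply, Measure.restrict_apply measurableSet_Icc.compl,
      Set.compl_inter_self, measure_empty, smul_zero]
  set F : ℝ → ℝ := fun t => (m (Set.Iic t)).toReal with hF_def
  have hFval : ∀ t ∈ Set.Icc a b, F t = (t - a) / (b - a) := by
    intro t ht
    have h1 : Set.Iic t ∩ Set.Icc a b = Set.Icc a t := by
      ext s
      simp only [Set.mem_inter_iff, Set.mem_Iic, Set.mem_Icc]
      constructor
      · rintro ⟨hs1, hs2, _⟩; exact ⟨hs2, hs1⟩
      · rintro ⟨hs1, hs2⟩; exact ⟨hs2, hs1, hs2.trans ht.2⟩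
    have h2 : m (Set.Iic t) = (ENNReal.ofReal (b - a))⁻¹ * ENNReal.ofReal (t - a) := by
      rw [hlaw, Measure.smul_apply, Measure.restrict_apply measurableSet_Iic, h1,
        Real.volume_Icc, smul_eq_mul]
    rw [hF_def]
    simp only
    rw [h2, ENNReal.toReal_mul, ENNReal.toReal_inv, ENNReal.toReal_ofReal hba.le,
      ENNReal.toReal_ofReal (sub_nonneg.mpr ht.1), div_eq_inv_mul]
  have hIci : ∀ t : ℝ, (m (Set.Ici t)).toReal = 1 - F t := by
    intro t
    rw [← Set.compl_Iio, prob_compl_eq_one_sub measurableSet_Iio, hIio t,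
      ENNReal.toReal_sub_of_le prob_le_one ENNReal.one_ne_top, ENNReal.toReal_one]
  have hIoi : ∀ t : ℝ, (m (Set.Ioi t)).toReal = 1 - F t := by
    intro t
    rw [← Set.compl_Iic, prob_compl_eq_one_sub measurableSet_Iic,
      ENNReal.toReal_sub_of_le prob_le_one ENNReal.one_ne_top, ENNReal.toReal_one]
  -- marginal values on ν
  have hνapply : ∀ (s : Set ℝ), MeasurableSet s →
      ν (Prod.snd ⁻¹' s) = m s := by
    intro s hs
    rw [← hsnd, Measure.map_apply measurable_snd hs]
  -- the comparison set
  set S : Set (((Fin d → ℝ) × ℝ) × ((Fin d → ℝ) × ℝ)) := {z | z.2.2 ≤ z.1.2} with hS_def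
  have hSmeas : MeasurableSet S :=
    measurableSet_le (measurable_snd.comp measurable_snd) (measurable_snd.comp measurable_fst)
  set Gp : (((Fin d → ℝ) × ℝ) × ((Fin d → ℝ) × ℝ)) → ℝ :=
    fun z => if z.2.2 ≤ z.1.2 then g z.1 else g z.2 with hGp_def
  set Gm : (((Fin d → ℝ) × ℝ) × ((Fin d → ℝ) × ℝ)) → ℝ :=
    fun z => if z.2.2 ≤ z.1.2 then g z.2 else g z.1 with hGm_def
  have hGpmeas : Measurable Gp :=
    Measurable.ite hSmeas (hgmeas.comp measurable_fst) (hgmeas.comp measurable_snd)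
  have hGmmeas : Measurable Gm :=
    Measurable.ite hSmeas (hgmeas.comp measurable_snd) (hgmeas.comp measurable_fst)
  -- transport the two if-integrals
  have hIp : (∫ ω, deriv φ (h (if Y' ω ≤ Y ω then X ω else X' ω)) ∂μ)
      = ∫ z, Gp z ∂(ν.prod ν) := by
    rw [← hjoint, integral_map hjm.aemeasurable hGpmeas.aestronglyMeasurable]
    refine integral_congr_ae (Filter.Eventually.of_forall fun ω => ?_)
    by_cases hc : Y' ω ≤ Y ω <;> simp [hGp_def, hg_def, hc]
  have hIm : (∫ ω, deriv φ (h (if Y' ω ≤ Y ω then X' ω else X ω)) ∂μ)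
      = ∫ z, Gm z ∂(ν.prod ν) := by
    rw [← hjoint, integral_map hjm.aemeasurable hGmmeas.aestronglyMeasurable]
    refine integral_congr_ae (Filter.Eventually.of_forall fun ω => ?_)
    by_cases hc : Y' ω ≤ Y ω <;> simp [hGm_def, hg_def, hc]
  -- integrability of indicator pieces
  have hindint : ∀ (T : Set (((Fin d → ℝ) × ℝ) × ((Fin d → ℝ) × ℝ))), MeasurableSet T →
      ∀ (f : (((Fin d → ℝ) × ℝ) × ((Fin d → ℝ) × ℝ)) → ℝ), Measurable f → (∀ z, |f z| ≤ M) →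
      Integrable (T.indicator f) (ν.prod ν) := by
    intro T hT f hf hb
    refine bdd_integrable (hf.indicator hT).aestronglyMeasurable (C := M) ?_
    filter_upwards with z
    by_cases hz : z ∈ T
    · rw [Set.indicator_of_mem hz]; exact hb z
    · rw [Set.indicator_of_notMem hz]; simpa using hM0
  have hintAp : Integrable (fun z => S.indicator (fun z => g z.1) z) (ν.prod ν) :=
    hindint S hSmeas (fun z => g z.1) (hgmeas.comp measurable_fst) (fun z => hgbd z.1)
  have hintBp : Integrable (fun z => Sᶜ.indicator (fun z => g z.2) z) (ν.prod ν) :=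
    hindint Sᶜ hSmeas.compl (fun z => g z.2) (hgmeas.comp measurable_snd) (fun z => hgbd z.2)
  have hintAm : Integrable (fun z => S.indicator (fun z => g z.2) z) (ν.prod ν) :=
    hindint S hSmeas (fun z => g z.2) (hgmeas.comp measurable_snd) (fun z => hgbd z.2)
  have hintBm : Integrable (fun z => Sᶜ.indicator (fun z => g z.1) z) (ν.prod ν) :=
    hindint Sᶜ hSmeas.compl (fun z => g z.1) (hgmeas.comp measurable_fst) (fun z => hgbd z.1)
  -- Fubini computations
  have hAp : ∫ z, S.indicator (fun z => g z.1) z ∂(ν.prod ν) = ∫ p, F p.2 * g p ∂ν := by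
    rw [integral_prod _ hintAp]
    refine integral_congr_ae (Filter.Eventually.of_forall fun p => ?_)
    have e1 : ∀ q : (Fin d → ℝ) × ℝ, S.indicator (fun z => g z.1) (p, q)
        = (Prod.snd ⁻¹' Set.Iic p.2).indicator (fun _ => g p) q := by
      intro q
      by_cases hq : q.2 ≤ p.2
      · rw [Set.indicator_of_mem (by exact hq), Set.indicator_of_mem (by exact hq)]
      · rw [Set.indicator_of_notMem (by exact hq), Set.indicator_of_notMem (by exact hq)]
    simp_rw [e1]
    rw [integral_indicator_const _ (measurable_snd measurableSet_Iic),
      measureReal_def, hνapply _ measurableSet_Iic, smul_eq_mul]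
  have hBp : ∫ z, Sᶜ.indicator (fun z => g z.2) z ∂(ν.prod ν) = ∫ q, F q.2 * g q ∂ν := by
    rw [integral_prod_symm _ hintBp]
    refine integral_congr_ae (Filter.Eventually.of_forall fun q => ?_)
    have e1 : ∀ p : (Fin d → ℝ) × ℝ, Sᶜ.indicator (fun z => g z.2) (p, q)
        = (Prod.snd ⁻¹' Set.Iio q.2).indicator (fun _ => g q) p := by
      intro p
      by_cases hq : p.2 < q.2
      · rw [Set.indicator_of_mem (by exact not_le.mpr hq), Set.indicator_of_mem (by exact hq)]
      · rw [Set.indicator_of_notMem (by simp only [Set.notMem_compl_iff]; exact not_lt.mp hq),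
          Set.indicator_of_notMem (by exact hq)]
    simp_rw [e1]
    rw [integral_indicator_const _ (measurable_snd measurableSet_Iio),
      measureReal_def, hνapply _ measurableSet_Iio, hIio, smul_eq_mul]
  have hAm : ∫ z, S.indicator (fun z => g z.2) z ∂(ν.prod ν) = ∫ q, (1 - F q.2) * g q ∂ν := by
    rw [integral_prod_symm _ hintAm]
    refine integral_congr_ae (Filter.Eventually.of_forall fun q => ?_)
    have e1 : ∀ p : (Fin d → ℝ) × ℝ, S.indicator (fun z => g z.2) (p, q)
        = (Prod.snd ⁻¹' Set.Ici q.2).indicator (fun _ => g q) p := by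
      intro p
      by_cases hq : q.2 ≤ p.2
      · rw [Set.indicator_of_mem (by exact hq), Set.indicator_of_mem (by exact hq)]
      · rw [Set.indicator_of_notMem (by exact hq), Set.indicator_of_notMem (by exact hq)]
    simp_rw [e1]
    rw [integral_indicator_const _ (measurable_snd measurableSet_Ici),
      measureReal_def, hνapply _ measurableSet_Ici, smul_eq_mul, hIci]
  have hBm : ∫ z, Sᶜ.indicator (fun z => g z.1) z ∂(ν.prod ν) = ∫ p, (1 - F p.2) * g p ∂ν := by
    rw [integral_prod _ hintBm]
    refine integral_congr_ae (Filter.Eventually.of_forall fun p => ?_)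
    have e1 : ∀ q : (Fin d → ℝ) × ℝ, Sᶜ.indicator (fun z => g z.1) (p, q)
        = (Prod.snd ⁻¹' Set.Ioi p.2).indicator (fun _ => g p) q := by
      intro q
      by_cases hq : p.2 < q.2
      · rw [Set.indicator_of_mem (by exact not_le.mpr hq), Set.indicator_of_mem (by exact hq)]
      · rw [Set.indicator_of_notMem (by simp only [Set.notMem_compl_iff]; exact not_lt.mp hq),
          Set.indicator_of_notMem (by exact hq)]
    simp_rw [e1]
    rw [integral_indicator_const _ (measurable_snd measurableSet_Ioi),
      measureReal_def, hνapply _ measurableSet_Ioi, smul_eq_mul, hIoi]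
  -- split Gp and Gm
  have hGp_split : ∫ z, Gp z ∂(ν.prod ν) = 2 * ∫ p, F p.2 * g p ∂ν := by
    have e : Gp = fun z => S.indicator (fun z => g z.1) z + Sᶜ.indicator (fun z => g z.2) z := by
      funext z
      by_cases hz : z.2.2 ≤ z.1.2
      · rw [hGp_def]
        simp only [if_pos hz]
        rw [Set.indicator_of_mem (by exact hz), Set.indicator_of_notMem (by exact fun hc => hc hz),
          add_zero]
      · rw [hGp_def]
        simp only [if_neg hz]
        rw [Set.indicator_of_notMem (by exact hz), Set.indicator_of_mem (by exact hz), zero_add]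
    rw [e, integral_add hintAp hintBp, hAp, hBp]; ring
  have hGm_split : ∫ z, Gm z ∂(ν.prod ν) = 2 * ∫ p, (1 - F p.2) * g p ∂ν := by
    have e : Gm = fun z => S.indicator (fun z => g z.2) z + Sᶜ.indicator (fun z => g z.1) z := by
      funext z
      by_cases hz : z.2.2 ≤ z.1.2
      · rw [hGm_def]
        simp only [if_pos hz]
        rw [Set.indicator_of_mem (by exact hz), Set.indicator_of_notMem (by exact fun hc => hc hz),
          add_zero]
      · rw [hGm_def]
        simp only [if_neg hz]
        rw [Set.indicator_of_notMem (by exact hz), Set.indicator_of_mem (by exact hz), zero_add]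
    rw [e, integral_add hintAm hintBm, hAm, hBm]; ring
  -- a.e. support fact on ν
  have hae : ∀ᵐ p ∂ν, p.2 ∈ Set.Icc a b := by
    rw [ae_iff]
    have e : {p : (Fin d → ℝ) × ℝ | ¬ p.2 ∈ Set.Icc a b} = Prod.snd ⁻¹' (Set.Icc a b)ᶜ := rfl
    rw [e, hνapply _ measurableSet_Icc.compl, hsupp]
  have hJ : ∫ p, F p.2 * g p ∂ν = ∫ p, ((p.2 - a) / (b - a)) * g p ∂ν := by
    refine integral_congr_ae ?_
    filter_upwards [hae] with p hp
    rw [hFval _ hp]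
  have hK : ∫ p, (1 - F p.2) * g p ∂ν = ∫ p, ((b - p.2) / (b - a)) * g p ∂ν := by
    refine integral_congr_ae ?_
    filter_upwards [hae] with p hp
    rw [hFval _ hp]
    congr 1
    field_simp
    ring
  -- integrability of the two ν-integrands
  have hf1int : Integrable (fun p => ((p.2 - a) / (b - a)) * g p) ν := by
    refine bdd_integrable (((measurable_snd.sub measurable_const).div_const _).mul
      hgmeas).aestronglyMeasurable (C := M) ?_
    filter_upwards [hae] with p hp
    have h1 : |(p.2 - a) / (b - a)| ≤ 1 := by
      rw [abs_of_nonneg (div_nonneg (sub_nonneg.mpr hp.1) hba.le), div_le_one hba]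
      linarith [hp.2]
    calc |(p.2 - a) / (b - a) * g p| = |(p.2 - a) / (b - a)| * |g p| := abs_mul _ _
      _ ≤ 1 * M := mul_le_mul h1 (hgbd p) (abs_nonneg _) zero_le_one
      _ = M := one_mul M
  have hf2int : Integrable (fun p => ((b - p.2) / (b - a)) * g p) ν := by
    refine bdd_integrable (((measurable_const.sub measurable_snd).div_const _).mul
      hgmeas).aestronglyMeasurable (C := M) ?_
    filter_upwards [hae] with p hp
    have h1 : |(b - p.2) / (b - a)| ≤ 1 := by
      rw [abs_of_nonneg (div_nonneg (sub_nonneg.mpr hp.2) hba.le), div_le_one hba]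
      linarith [hp.1]
    calc |(b - p.2) / (b - a) * g p| = |(b - p.2) / (b - a)| * |g p| := abs_mul _ _
      _ ≤ 1 * M := mul_le_mul h1 (hgbd p) (abs_nonneg _) zero_le_one
      _ = M := one_mul M
  -- combination
  have hcomb : (b - lam) * (∫ p, ((p.2 - a) / (b - a)) * g p ∂ν)
      + (a - lam) * (∫ p, ((b - p.2) / (b - a)) * g p ∂ν)
      = ∫ p, (p.2 - lam) * g p ∂ν := by
    rw [← integral_const_mul, ← integral_const_mul, ← integral_add (hf1int.const_mul _)
      (hf2int.const_mul _)]
    refine integral_congr_ae (Filter.Eventually.of_forall fun p => ?_)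
    field_simp
    ring
  -- transport back
  have hT : ∫ p, (p.2 - lam) * g p ∂ν = ∫ ω, (Y ω - lam) * deriv φ (h (X ω)) ∂μ := by
    rw [hν_def, integral_map (f := fun p : (Fin d → ℝ) × ℝ => (p.2 - lam) * g p) hXY.aemeasurable
      ((measurable_snd.sub measurable_const).mul hgmeas).aestronglyMeasurable]
  -- the key identity
  have key : (b / 2 - lam / 2) * (∫ ω, deriv φ (h (if Y' ω ≤ Y ω then X ω else X' ω)) ∂μ)
      + (a / 2 - lam / 2) * (∫ ω, deriv φ (h (if Y' ω ≤ Y ω then X' ω else X ω)) ∂μ)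
      = ∫ ω, (Y ω - lam) * deriv φ (h (X ω)) ∂μ := by
    rw [hIp, hIm, hGp_split, hGm_split, hJ, hK, ← hT, ← hcomb]
    ring
  -- μ-side integrability
  have hgXint : Integrable (fun ω => deriv φ (h (X ω))) μ := by
    refine bdd_integrable ((measurable_deriv φ).comp (hh.comp hX)).aestronglyMeasurable
      (C := M) (Filter.Eventually.of_forall fun ω => hM _)
  have haeY : ∀ᵐ ω ∂μ, Y ω ∈ Set.Icc a b := by
    rw [ae_iff]
    have e : {ω | ¬ Y ω ∈ Set.Icc a b} = Y ⁻¹' (Set.Icc a b)ᶜ := rfl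
    rw [e, ← Measure.map_apply hY measurableSet_Icc.compl]
    exact hsupp
  have hintf3 : Integrable (fun ω => (Y ω - lam) * deriv φ (h (X ω))) μ := by
    refine bdd_integrable ((hY.sub measurable_const).mul
      ((measurable_deriv φ).comp (hh.comp hX))).aestronglyMeasurable
      (C := (|a| + |b| + |lam|) * M) ?_
    filter_upwards [haeY] with ω hω
    have h1 : |Y ω - lam| ≤ |a| + |b| + |lam| := by
      have h2 := hω.1; have h3 := hω.2
      have := neg_abs_le a; have := le_abs_self b; have := neg_abs_le lam
      have := le_abs_self lam; have := abs_nonneg a; have := abs_nonneg b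
      rw [abs_le]; constructor <;> linarith
    calc |(Y ω - lam) * deriv φ (h (X ω))| = |Y ω - lam| * |deriv φ (h (X ω))| := abs_mul _ _
      _ ≤ (|a| + |b| + |lam|) * M :=
          mul_le_mul h1 (hM _) (abs_nonneg _) (by positivity)
  have hintf2 : Integrable (fun ω => φ (h (X ω)) - (h (X ω) - lam) * deriv φ (h (X ω))) μ := by
    have e : (fun ω => φ (h (X ω)) - (h (X ω) - lam) * deriv φ (h (X ω)))
        = fun ω => φ (h (X ω)) - (h (X ω) * deriv φ (h (X ω)) - lam * deriv φ (h (X ω))) := by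
      funext ω; ring
    rw [e]
    exact hintφh.sub (hinth.sub (hgXint.const_mul lam))
  have hRHS : ∫ ω, (φ (Y ω) - φ (h (X ω)) - (Y ω - h (X ω)) * deriv φ (h (X ω))) ∂μ
      = ∫ ω, (φ (Y ω) - (φ (h (X ω)) - (h (X ω) - lam) * deriv φ (h (X ω)))
          - (Y ω - lam) * deriv φ (h (X ω))) ∂μ :=
    integral_congr_ae (Filter.Eventually.of_forall fun ω => by ring)
  have hsplit : ∫ ω, (φ (Y ω) - (φ (h (X ω)) - (h (X ω) - lam) * deriv φ (h (X ω)))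
          - (Y ω - lam) * deriv φ (h (X ω))) ∂μ
      = (∫ ω, φ (Y ω) ∂μ)
        - (∫ ω, (φ (h (X ω)) - (h (X ω) - lam) * deriv φ (h (X ω))) ∂μ)
        - ∫ ω, (Y ω - lam) * deriv φ (h (X ω)) ∂μ := by
    have hintf12 : Integrable
        (fun ω => φ (Y ω) - (φ (h (X ω)) - (h (X ω) - lam) * deriv φ (h (X ω)))) μ :=
      hintφY.sub hintf2
    rw [integral_sub hintf12 hintf3, integral_sub hintφY hintf2]
  rw [hRHS, hsplit]
  linarith [key]
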